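/- arXiv:1811.07093 — 3 statements merged into one kernel-verified Lean document; each statement's English description precedes it below -/
import Mathlib

section
/- The spawning potential ratio F ↦ SPR*(F) = ∑_{a=r}^{A−1} W_a m_a ℒ_a(F) e^{−τZ_a(F)} + W_A m_A ℒ_A(F) e^{−τZ_A(F)}/(1 − e^{−Z_A(F)}) is strictly decreasing in F ≥ 0, provided the selectivity coefficients c_a are positive for a ≥ r, and tends to 0 as F → ∞. -/
open Set Filter

private lemma expfun_strictAnti {Cst k : ℝ} (hC : 0 < Cst) (hk : 0 < k)
    {x y : ℝ} (hxy : x < y) :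
    Cst * Real.exp (-(k * y)) < Cst * Real.exp (-(k * x)) := by
  have : -(k * y) < -(k * x) := by nlinarith
  exact mul_lt_mul_of_pos_left (Real.exp_lt_exp.2 this) hC

private lemma expfun_tendsto (Cst : ℝ) {k : ℝ} (hk : 0 < k) :
    Tendsto (fun F : ℝ => Cst * Real.exp (-(k * F))) atTop (nhds 0) := by
  have h0 : Tendsto (fun F : ℝ => k * F) atTop atTop :=
    Tendsto.const_mul_atTop hk tendsto_id
  have h1 : Tendsto (fun F : ℝ => -(k * F)) atTop atBot :=
    tendsto_neg_atTop_atBot.comp h0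
  have h2 : Tendsto (fun F : ℝ => Real.exp (-(k * F))) atTop (nhds 0) :=
    Real.tendsto_exp_atBot.comp h1
  simpa using h2.const_mul Cst

theorem SPR_strictAnti_tendsto_zero
    (A r : ℕ) (hA : 2 ≤ A) (hr : 1 ≤ r) (hrA : r ≤ A - 1)
    (W m M c : ℕ → ℝ) (τ : ℝ) (hτ : τ ∈ Set.Ioo (0 : ℝ) 1)
    (hW : ∀ a, 0 < W a) (hm : ∀ a, r ≤ a → 0 < m a) (hm1 : ∀ a, m a ≤ 1)
    (hM : ∀ a, 0 ≤ M a) (hMA : 0 < M A)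
    (hc : ∀ a, 0 ≤ c a) (hcr : ∀ a, r ≤ a → 0 < c a)
    (Z : ℕ → ℝ → ℝ) (hZ : ∀ a F, Z a F = M a + c a * F)
    (L : ℕ → ℝ → ℝ)
    (hL : ∀ a F, L a F = Real.exp (-(∑ x ∈ Finset.Icc 1 (a - 1), Z x F)))
    (SPR : ℝ → ℝ)
    (hSPR : ∀ F, SPR F =
      (∑ a ∈ Finset.Icc r (A - 1), W a * m a * L a F * Real.exp (-(τ * Z a F))) +
      W A * m A * L A F * Real.exp (-(τ * Z A F)) / (1 - Real.exp (-(Z A F)))) :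
    StrictAntiOn SPR (Set.Ici 0) ∧ Tendsto SPR atTop (nhds 0) := by
  obtain ⟨hτ0, hτ1⟩ := hτ
  have hrA' : r ≤ A := le_trans hrA (Nat.sub_le A 1)
  have key : ∀ a F, W a * m a * L a F * Real.exp (-(τ * Z a F)) =
      (W a * m a * Real.exp (-(∑ x ∈ Finset.Icc 1 (a - 1), M x)) *
        Real.exp (-(τ * M a))) *
      Real.exp (-(((∑ x ∈ Finset.Icc 1 (a - 1), c x) + τ * c a) * F)) := by
    intro a F
    have h1 : (∑ x ∈ Finset.Icc 1 (a - 1), Z x F)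
        = (∑ x ∈ Finset.Icc 1 (a - 1), M x)
          + (∑ x ∈ Finset.Icc 1 (a - 1), c x) * F := by
      simp only [hZ, Finset.sum_add_distrib, Finset.sum_mul]
    rw [hL, hZ, h1]
    rw [show -((∑ x ∈ Finset.Icc 1 (a - 1), M x)
          + (∑ x ∈ Finset.Icc 1 (a - 1), c x) * F)
        = -(∑ x ∈ Finset.Icc 1 (a - 1), M x)
          + -((∑ x ∈ Finset.Icc 1 (a - 1), c x) * F) by ring,
      show -(τ * (M a + c a * F)) = -(τ * M a) + -(τ * (c a * F)) by ring,
      show -(((∑ x ∈ Finset.Icc 1 (a - 1), c x) + τ * c a) * F)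
        = -((∑ x ∈ Finset.Icc 1 (a - 1), c x) * F) + -(τ * (c a * F)) by ring,
      Real.exp_add, Real.exp_add, Real.exp_add]
    ring
  have hCpos : ∀ a, r ≤ a →
      0 < W a * m a * Real.exp (-(∑ x ∈ Finset.Icc 1 (a - 1), M x)) *
        Real.exp (-(τ * M a)) := by
    intro a ha
    have h1 := hW a
    have h2 := hm a ha
    positivity
  have hkpos : ∀ a, r ≤ a →
      0 < (∑ x ∈ Finset.Icc 1 (a - 1), c x) + τ * c a := by
    intro a ha
    have h1 : 0 ≤ ∑ x ∈ Finset.Icc 1 (a - 1), c x :=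
      Finset.sum_nonneg fun x _ => hc x
    have h2 : 0 < τ * c a := mul_pos hτ0 (hcr a ha)
    linarith
  have hZApos : ∀ F : ℝ, 0 ≤ F → 0 < Z A F := by
    intro F hF
    rw [hZ]
    have := hc A
    nlinarith
  have hden : ∀ F : ℝ, 0 ≤ F → 0 < 1 - Real.exp (-(Z A F)) := by
    intro F hF
    have h1 : Real.exp (-(Z A F)) < 1 := by
      rw [Real.exp_lt_one_iff]
      linarith [hZApos F hF]
    linarith
  have hdenMono : ∀ x y : ℝ, x ≤ y →
      1 - Real.exp (-(Z A x)) ≤ 1 - Real.exp (-(Z A y)) := by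
    intro x y hxy
    have h1 : Z A x ≤ Z A y := by
      rw [hZ, hZ]
      nlinarith [hc A]
    have := Real.exp_le_exp.2 (neg_le_neg h1)
    linarith
  constructor
  · intro x hx y hy hxy
    simp only [Set.mem_Ici] at hx hy
    rw [hSPR x, hSPR y]
    have hsum : (∑ a ∈ Finset.Icc r (A - 1), W a * m a * L a y * Real.exp (-(τ * Z a y)))
        < ∑ a ∈ Finset.Icc r (A - 1), W a * m a * L a x * Real.exp (-(τ * Z a x)) := by
      apply Finset.sum_lt_sum_of_nonempty (Finset.nonempty_Icc.2 hrA)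
      intro a ha
      have har : r ≤ a := (Finset.mem_Icc.1 ha).1
      rw [key a x, key a y]
      exact expfun_strictAnti (hCpos a har) (hkpos a har) hxy
    have hq : W A * m A * L A y * Real.exp (-(τ * Z A y)) / (1 - Real.exp (-(Z A y)))
        < W A * m A * L A x * Real.exp (-(τ * Z A x)) / (1 - Real.exp (-(Z A x))) := by
      rw [key A x, key A y]
      have hdx := hden x hx
      have hdle := hdenMono x y (le_of_lt hxy)
      have hNlt := expfun_strictAnti (hCpos A hrA') (hkpos A hrA') hxy
      have hNy : 0 < (W A * m A * Real.exp (-(∑ x ∈ Finset.Icc 1 (A - 1), M x)) *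
          Real.exp (-(τ * M A))) *
          Real.exp (-(((∑ x ∈ Finset.Icc 1 (A - 1), c x) + τ * c A) * y)) := by
        have := hCpos A hrA'
        positivity
      calc _ ≤ (W A * m A * Real.exp (-(∑ x ∈ Finset.Icc 1 (A - 1), M x)) *
            Real.exp (-(τ * M A))) *
            Real.exp (-(((∑ x ∈ Finset.Icc 1 (A - 1), c x) + τ * c A) * y)) /
            (1 - Real.exp (-(Z A x))) := by gcongr
        _ < _ := by gcongr
    exact add_lt_add hsum hq
  · have hfin : Tendsto (fun F => ∑ a ∈ Finset.Icc r (A - 1),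
        W a * m a * L a F * Real.exp (-(τ * Z a F))) atTop (nhds 0) := by
      have h0 : Tendsto (fun F => ∑ a ∈ Finset.Icc r (A - 1),
          (W a * m a * Real.exp (-(∑ x ∈ Finset.Icc 1 (a - 1), M x)) *
            Real.exp (-(τ * M a))) *
          Real.exp (-(((∑ x ∈ Finset.Icc 1 (a - 1), c x) + τ * c a) * F)))
          atTop (nhds 0) := by
        have := tendsto_finset_sum (Finset.Icc r (A - 1))
          (fun a ha => expfun_tendsto
            (W a * m a * Real.exp (-(∑ x ∈ Finset.Icc 1 (a - 1), M x)) *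
              Real.exp (-(τ * M a)))
            (hkpos a (Finset.mem_Icc.1 ha).1))
        simpa using this
      refine h0.congr fun F => ?_
      exact Finset.sum_congr rfl fun a _ => (key a F).symm
    have hd0 : 0 < 1 - Real.exp (-(M A)) := by
      have h1 : Real.exp (-(M A)) < 1 := by
        rw [Real.exp_lt_one_iff]; linarith
      linarith
    have hq : Tendsto (fun F => W A * m A * L A F * Real.exp (-(τ * Z A F)) /
        (1 - Real.exp (-(Z A F)))) atTop (nhds 0) := by
      apply squeeze_zero' (g := fun F =>
        ((W A * m A * Real.exp (-(∑ x ∈ Finset.Icc 1 (A - 1), M x)) *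
          Real.exp (-(τ * M A))) / (1 - Real.exp (-(M A)))) *
        Real.exp (-(((∑ x ∈ Finset.Icc 1 (A - 1), c x) + τ * c A) * F)))
      · filter_upwards [eventually_ge_atTop (0 : ℝ)] with F hF
        apply div_nonneg _ (le_of_lt (hden F hF))
        rw [key A F]
        exact le_of_lt (by have := hCpos A hrA'; positivity)
      · filter_upwards [eventually_ge_atTop (0 : ℝ)] with F hF
        rw [key A F, div_mul_eq_mul_div]
        have hdle : 1 - Real.exp (-(M A)) ≤ 1 - Real.exp (-(Z A F)) := by
          have h1 : M A ≤ Z A F := by rw [hZ]; nlinarith [hc A]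
          have := Real.exp_le_exp.2 (neg_le_neg h1)
          linarith
        have hN : 0 ≤ (W A * m A * Real.exp (-(∑ x ∈ Finset.Icc 1 (A - 1), M x)) *
            Real.exp (-(τ * M A))) *
            Real.exp (-(((∑ x ∈ Finset.Icc 1 (A - 1), c x) + τ * c A) * F)) :=
          le_of_lt (by have := hCpos A hrA'; positivity)
        gcongr
      · exact expfun_tendsto _ (hkpos A hrA')
    have htot := hfin.add hq
    simp only [add_zero] at htot
    exact htot.congr fun F => (hSPR F).symm
end

section
/- For the single-age stochastic Beverton-Holt model N_{t+1} = φ(e^{−Z}N_t)U_t with φ(s) = αs/(β+s), the solution has closed form N_t = α^t (∏_{j=0}^{t−1}U_j) N₀ / ((βe^Z)^t + N₀ ∑_{j=0}^{t−1}(βe^Z)^{t−1−j} α^j ∏_{k=0}^{j−1}U_k), for all t ≥ 1 and N₀ > 0, U_j > 0. -/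
theorem stochastic_beverton_holt_closed_form
    (α β Z : ℝ) (hα : 0 < α) (hβ : 0 < β) (hZ : 0 < Z)
    (U : ℕ → ℝ) (hU : ∀ j, 0 < U j)
    (N : ℕ → ℝ) (hN0 : 0 < N 0)
    (hrec : ∀ t, N (t + 1) = α * (Real.exp (-Z) * N t) * U t / (β + Real.exp (-Z) * N t)) :
    ∀ t, 1 ≤ t →
      N t = α ^ t * (∏ j ∈ Finset.range t, U j) * N 0 /
        ((β * Real.exp Z) ^ t +
          N 0 * ∑ j ∈ Finset.range t,
            (β * Real.exp Z) ^ (t - 1 - j) * α ^ j * ∏ k ∈ Finset.range j, U k) := by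
  set b := β * Real.exp Z with hb
  have hbpos : 0 < b := by positivity
  have hE : Real.exp (-Z) * Real.exp Z = 1 := by
    rw [← Real.exp_add]; simp
  have hNpos : ∀ t, 0 < N t := by
    intro t
    induction t with
    | zero => exact hN0
    | succ t ih =>
      rw [hrec t]
      have h1 : 0 < Real.exp (-Z) * N t := mul_pos (Real.exp_pos _) ih
      exact div_pos (mul_pos (mul_pos hα h1) (hU t)) (add_pos hβ h1)
  have hrec' : ∀ t, N (t + 1) = α * N t * U t / (b + N t) := by
    intro t
    have h1 : (0:ℝ) < β + Real.exp (-Z) * N t :=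
      add_pos hβ (mul_pos (Real.exp_pos _) (hNpos t))
    have h2 : 0 < b + N t := add_pos hbpos (hNpos t)
    rw [hrec t, div_eq_div_iff h1.ne' h2.ne']
    rw [hb]
    linear_combination α * U t * N t * β * hE
  have hDpos : ∀ t, 0 < b ^ t + N 0 * ∑ j ∈ Finset.range t,
      b ^ (t - 1 - j) * α ^ j * ∏ k ∈ Finset.range j, U k := by
    intro t
    have h : 0 ≤ ∑ j ∈ Finset.range t,
        b ^ (t - 1 - j) * α ^ j * ∏ k ∈ Finset.range j, U k := by
      apply Finset.sum_nonneg
      intro j _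
      have : 0 < ∏ k ∈ Finset.range j, U k := Finset.prod_pos (fun k _ => hU k)
      positivity
    positivity
  intro t ht
  induction t, ht using Nat.le_induction with
  | base =>
    have h2 : 0 < b + N 0 := by positivity
    rw [hrec' 0]
    simp only [Finset.prod_range_one, Finset.sum_range_one, pow_one, pow_zero,
      Finset.prod_range_zero, Nat.sub_self, mul_one, one_mul]
    ring
  | succ t ht IH =>
    have hDt := hDpos t
    have hDt1 := hDpos (t + 1)
    have hsum : ∑ j ∈ Finset.range (t + 1),
        b ^ (t + 1 - 1 - j) * α ^ j * ∏ k ∈ Finset.range j, U k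
        = b * (∑ j ∈ Finset.range t, b ^ (t - 1 - j) * α ^ j * ∏ k ∈ Finset.range j, U k)
          + α ^ t * ∏ k ∈ Finset.range t, U k := by
      rw [Finset.sum_range_succ, Finset.mul_sum]
      congr 1
      · apply Finset.sum_congr rfl
        intro j hj
        have hjt : j < t := Finset.mem_range.mp hj
        have he : t + 1 - 1 - j = (t - 1 - j) + 1 := by omega
        rw [he, pow_succ]
        ring
      · have he : t + 1 - 1 - t = 0 := by omega
        rw [he]
        simp
    have hNt : N t * (b ^ t + N 0 * ∑ j ∈ Finset.range t,
        b ^ (t - 1 - j) * α ^ j * ∏ k ∈ Finset.range j, U k)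
        = α ^ t * (∏ j ∈ Finset.range t, U j) * N 0 := by
      rw [IH, div_mul_cancel₀ _ hDt.ne']
    have hbn : 0 < b + N t := add_pos hbpos (hNpos t)
    rw [eq_div_iff hDt1.ne', hrec' t, hsum, Finset.prod_range_succ, pow_succ, pow_succ,
      div_mul_eq_mul_div, div_eq_iff hbn.ne']
    linear_combination (α * U t * b) * hNt
end

section
/- Fix α, β > 0. Define g(σ) = E[αU/(β+U)] where U = exp(σW − σ²/2) and W ∼ N(0,1). Then g is strictly decreasing in σ on [0,∞). -/
open Set MeasureTheory
open Real Function

noncomputable def nphi (y : ℝ) : ℝ := (Real.sqrt (2 * Real.pi))⁻¹ * Real.exp (-(y ^ 2) / 2)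

lemma nphi_pos (y : ℝ) : 0 < nphi y := by
  have : 0 < Real.sqrt (2 * Real.pi) := Real.sqrt_pos.2 (by positivity)
  exact mul_pos (inv_pos.2 this) (Real.exp_pos _)

lemma nphi_cont : Continuous nphi := by unfold nphi; fun_prop

lemma integrable_exp_half_sq : Integrable (fun y : ℝ => Real.exp (-(y ^ 2) / 2)) := by
  have := integrable_exp_neg_mul_sq (b := (1:ℝ)/2) (by norm_num)
  convert this using 2 with y
  ring_nf

lemma integrable_nphi : Integrable nphi := integrable_exp_half_sq.const_mul _

lemma integral_nphi : ∫ y, nphi y = 1 := by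
  unfold nphi
  rw [integral_const_mul]
  have h : ∫ y : ℝ, Real.exp (-(y ^ 2) / 2) = Real.sqrt (2 * Real.pi) := by
    have h0 := integral_gaussian ((1:ℝ)/2)
    have h2 : ∀ y : ℝ, Real.exp (-(1/2 : ℝ) * y ^ 2) = Real.exp (-(y ^ 2) / 2) := by
      intro y; ring_nf
    simp_rw [h2] at h0
    rw [h0]
    norm_num
    ring
  rw [h]
  have : Real.sqrt (2 * Real.pi) ≠ 0 := ne_of_gt (Real.sqrt_pos.2 (by positivity))
  field_simp

lemma nphi_shift (t y : ℝ) : Real.exp (t * y - t ^ 2 / 2) * nphi y = nphi (y - t) := by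
  unfold nphi
  rw [mul_comm (Real.exp _), mul_assoc, ← Real.exp_add]
  congr 1
  ring

lemma integrable_exp_nphi (t : ℝ) :
    Integrable (fun y => Real.exp (t * y - t ^ 2 / 2) * nphi y) := by
  simp_rw [nphi_shift]
  exact integrable_nphi.comp_sub_right t

lemma integral_exp_nphi (t : ℝ) : ∫ y, Real.exp (t * y - t ^ 2 / 2) * nphi y = 1 := by
  simp_rw [nphi_shift]
  rw [integral_sub_right_eq_self nphi t]
  exact integral_nphi

lemma integrable_nphi_affine {b : ℝ} (hb : b ≠ 0) (c : ℝ) :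
    Integrable (fun x => nphi (b * x + c)) := by
  have h1 : Integrable (fun x => nphi (x + c)) := integrable_nphi.comp_add_right c
  exact (integrable_comp_mul_left_iff (fun z => nphi (z + c)) hb).2 h1

lemma integral_nphi_affine {b : ℝ} (hb : 0 < b) (c : ℝ) :
    ∫ x, nphi (b * x + c) = b⁻¹ := by
  have h1 : (fun x : ℝ => nphi (b * x + c)) = fun x => (fun z => nphi (z + c)) (b * x) := rfl
  rw [h1, Measure.integral_comp_mul_left (fun z => nphi (z + c)) b,
    integral_add_right_eq_self nphi c, integral_nphi]
  simp [abs_of_pos (inv_pos.2 hb)]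

lemma tangent_key {α β a x : ℝ} (hα : 0 < α) (hβ : 0 < β) (ha : 0 < a) (hx : 0 < x) :
    α * a / (β + a) + α * β / (β + a) ^ 2 * (x - a) - α * x / (β + x)
      = α * β * (x - a) ^ 2 / ((β + a) ^ 2 * (β + x)) := by
  have h1 : β + a ≠ 0 := by positivity
  have h2 : β + x ≠ 0 := by positivity
  field_simp
  ring

lemma tangent_le {α β a x : ℝ} (hα : 0 < α) (hβ : 0 < β) (ha : 0 < a) (hx : 0 < x) :
    α * x / (β + x) ≤ α * a / (β + a) + α * β / (β + a) ^ 2 * (x - a) := by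
  nlinarith [tangent_key hα hβ ha hx, sq_nonneg (x - a),
    mul_pos (pow_pos (by positivity : (0:ℝ) < β + a) 2) (by positivity : (0:ℝ) < β + x),
    div_nonneg (by positivity : (0:ℝ) ≤ α * β * (x-a)^2)
      (by positivity : (0:ℝ) ≤ (β + a) ^ 2 * (β + x))]

lemma tangent_lt {α β a x : ℝ} (hα : 0 < α) (hβ : 0 < β) (ha : 0 < a) (hx : 0 < x)
    (hne : x ≠ a) :
    α * x / (β + x) < α * a / (β + a) + α * β / (β + a) ^ 2 * (x - a) := by
  have h := tangent_key hα hβ ha hx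
  have hpos : 0 < α * β * (x - a) ^ 2 / ((β + a) ^ 2 * (β + x)) := by
    have hxa : x - a ≠ 0 := sub_ne_zero.2 hne
    positivity
  linarith [h]

lemma jensen_step {α β a τ : ℝ} (hα : 0 < α) (hβ : 0 < β) (ha : 0 < a) (hτ : 0 < τ) :
    ∫ y, α * (a * Real.exp (τ * y - τ ^ 2 / 2)) / (β + a * Real.exp (τ * y - τ ^ 2 / 2)) * nphi y
      < α * a / (β + a) := by
  set V : ℝ → ℝ := fun y => Real.exp (τ * y - τ ^ 2 / 2) with hV
  have hVpos : ∀ y, 0 < V y := fun y => Real.exp_pos _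
  have haV : ∀ y, 0 < a * V y := fun y => mul_pos ha (hVpos y)
  set fI : ℝ → ℝ := fun y => α * (a * V y) / (β + a * V y) * nphi y with hfI
  set T : ℝ → ℝ := fun y =>
    (α * a / (β + a) + α * β / (β + a) ^ 2 * (a * V y - a)) * nphi y with hT
  have hba : (0:ℝ) < β + a := by positivity
  -- rewrite T as linear combination
  have hTeq : T = fun y =>
      (α * a / (β + a) - α * β / (β + a) ^ 2 * a) * nphi y
        + (α * β / (β + a) ^ 2 * a) * (V y * nphi y) := by
    funext y; simp only [hT]; ring
  have hT_int : Integrable T := by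
    rw [hTeq]
    exact (integrable_nphi.const_mul _).add ((integrable_exp_nphi τ).const_mul _)
  have hT_val : ∫ y, T y = α * a / (β + a) := by
    rw [hTeq, integral_add ((integrable_nphi.const_mul _))
      ((integrable_exp_nphi τ).const_mul _), integral_const_mul, integral_const_mul]
    rw [integral_nphi, integral_exp_nphi τ]
    ring
  have hfI_nonneg : ∀ y, 0 ≤ fI y := by
    intro y
    have := nphi_pos y
    have := haV y
    positivity
  have hfI_le : ∀ y, fI y ≤ α * nphi y := by
    intro y
    have h1 : α * (a * V y) / (β + a * V y) ≤ α := by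
      rw [div_le_iff₀ (by positivity)]
      nlinarith [haV y, hα, hβ]
    have := nphi_pos y
    calc fI y = α * (a * V y) / (β + a * V y) * nphi y := rfl
      _ ≤ α * nphi y := by
          apply mul_le_mul_of_nonneg_right h1 (le_of_lt (nphi_pos y))
  have hfI_cont : Continuous fI := by
    apply Continuous.mul _ nphi_cont
    apply Continuous.div (by fun_prop) (by fun_prop)
    intro y; exact ne_of_gt (by positivity : (0:ℝ) < β + a * V y)
  have hfI_int : Integrable fI := by
    apply Integrable.mono (integrable_nphi.const_mul α) hfI_cont.aestronglyMeasurable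
    filter_upwards with y
    rw [Real.norm_eq_abs, Real.norm_eq_abs, abs_of_nonneg (hfI_nonneg y)]
    exact le_trans (hfI_le y) (le_abs_self _)
  -- pointwise inequality
  have hle : ∀ y, fI y ≤ T y := by
    intro y
    exact mul_le_mul_of_nonneg_right (tangent_le hα hβ ha (haV y)) (le_of_lt (nphi_pos y))
  -- strictness
  have hlt : ∀ y, y ≠ τ / 2 → fI y < T y := by
    intro y hy
    have hne : a * V y ≠ a := by
      intro h
      have hV1 : V y = 1 := mul_left_cancel₀ (ne_of_gt ha) (h.trans (mul_one a).symm)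
      have h0 : τ * y - τ ^ 2 / 2 = 0 := (Real.exp_eq_one_iff _).1 hV1
      apply hy
      have hτ0 : τ ≠ 0 := ne_of_gt hτ
      field_simp at h0 ⊢
      nlinarith [h0]
    exact mul_lt_mul_of_pos_right (tangent_lt hα hβ ha (haV y) hne) (nphi_pos y)
  have hdiff_int : Integrable (fun y => T y - fI y) := hT_int.sub hfI_int
  have hpos : 0 < ∫ y, (T y - fI y) := by
    rw [integral_pos_iff_support_of_nonneg (fun y => sub_nonneg.2 (hle y)) hdiff_int]
    have hsub : Set.Ioi (τ / 2) ⊆ support fun y => T y - fI y := by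
      intro y hy
      exact sub_ne_zero.2 (ne_of_gt (hlt y (ne_of_gt hy)))
    refine lt_of_lt_of_le ?_ (measure_mono hsub)
    rw [Real.volume_Ioi]
    exact ENNReal.zero_lt_top
  have hlt2 : ∫ y, fI y < ∫ y, T y := by
    have h := integral_sub hT_int hfI_int
    rw [h] at hpos
    linarith
  calc ∫ y, fI y < ∫ y, T y := hlt2
    _ = α * a / (β + a) := hT_val

lemma nphi_symm {σ₁ σ₂ τ : ℝ} (hτ : τ ≠ 0) (hsum : σ₁ ^ 2 + τ ^ 2 = σ₂ ^ 2) (x u : ℝ) :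
    nphi ((σ₂ * u - σ₁ * x) / τ) * nphi x = nphi ((σ₂ * x - σ₁ * u) / τ) * nphi u := by
  unfold nphi
  rw [mul_mul_mul_comm, ← Real.exp_add, mul_mul_mul_comm, ← Real.exp_add]
  congr 1
  rw [Real.exp_eq_exp]
  field_simp
  linear_combination (u ^ 2 - x ^ 2) * hsum

lemma gauss_proj {H : ℝ → ℝ} (hH : Continuous H) {C : ℝ} (h0 : ∀ z, 0 ≤ H z)
    (hC : ∀ z, H z ≤ C)
    {σ₁ σ₂ τ : ℝ} (h2 : 0 < σ₂) (hτ : 0 < τ) (hsum : σ₁ ^ 2 + τ ^ 2 = σ₂ ^ 2) :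
    ∫ x, (∫ y, H (σ₁ * x + τ * y) * nphi y) * nphi x = ∫ u, H (σ₂ * u) * nphi u := by
  have hσ₂ : σ₂ ≠ 0 := ne_of_gt h2
  have hτ0 : τ ≠ 0 := ne_of_gt hτ
  have hst : 0 < σ₂ / τ := div_pos h2 hτ
  set K : ℝ → ℝ → ℝ := fun x u =>
    σ₂ / τ * (H (σ₂ * u) * nphi ((σ₂ * u - σ₁ * x) / τ) * nphi x) with hK
  have hC0 : 0 ≤ C := le_trans (h0 0) (hC 0)
  -- Step A : inner substitution
  have stepA : ∀ x, (∫ y, H (σ₁ * x + τ * y) * nphi y) * nphi x = ∫ u, K x u := by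
    intro x
    set k : ℝ → ℝ := fun u => H (σ₂ * u) * nphi ((σ₂ * u - σ₁ * x) / τ) with hk
    have hcomp : ∀ y, k (τ / σ₂ * y + σ₁ * x / σ₂) = H (σ₁ * x + τ * y) * nphi y := by
      intro y
      have e1 : σ₂ * (τ / σ₂ * y + σ₁ * x / σ₂) = σ₁ * x + τ * y := by field_simp; ring
      have e2 : (σ₁ * x + τ * y - σ₁ * x) / τ = y := by
        rw [add_sub_cancel_left]; exact mul_div_cancel_left₀ y hτ0
      simp only [hk, e1, e2]
    have hmain : ∫ y, H (σ₁ * x + τ * y) * nphi y = (σ₂ / τ) * ∫ u, k u := by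
      rw [← funext hcomp]
      have : (fun y => k (τ / σ₂ * y + σ₁ * x / σ₂))
          = fun y => (fun z => k (z + σ₁ * x / σ₂)) (τ / σ₂ * y) := rfl
      rw [this, Measure.integral_comp_mul_left (fun z => k (z + σ₁ * x / σ₂)) (τ / σ₂),
        integral_add_right_eq_self k (σ₁ * x / σ₂)]
      rw [abs_of_pos (inv_pos.2 (div_pos hτ h2))]
      rw [smul_eq_mul, inv_div]
    rw [hmain, ← integral_const_mul, ← integral_mul_const]
    congr 1
    funext u
    simp only [hK, hk]
    ring
  -- basic facts about K
  have hKcont : Continuous (uncurry K) := by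
    simp only [hK, uncurry]
    apply Continuous.mul continuous_const
    apply Continuous.mul
    · apply Continuous.mul
      · exact hH.comp (continuous_const.mul continuous_snd)
      · exact nphi_cont.comp (Continuous.div_const (by fun_prop) τ)
    · exact nphi_cont.comp continuous_fst
  have hKnonneg : ∀ x u, 0 ≤ K x u := by
    intro x u
    simp only [hK]
    have := nphi_pos ((σ₂ * u - σ₁ * x) / τ)
    have := nphi_pos x
    have := h0 (σ₂ * u)
    positivity
  have hint_u : ∀ x, Integrable (fun u => K x u) := by
    intro x
    have hb : Integrable (fun u => (σ₂ / τ * C * nphi x) *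
        nphi (σ₂ / τ * u + -(σ₁ * x) / τ)) :=
      (integrable_nphi_affine (ne_of_gt hst) _).const_mul _
    apply Integrable.mono hb
    · exact (hKcont.comp (Continuous.prodMk_right x)).aestronglyMeasurable
    · filter_upwards with u
      rw [Real.norm_eq_abs, Real.norm_eq_abs, abs_of_nonneg (hKnonneg x u)]
      have harg : (σ₂ * u - σ₁ * x) / τ = σ₂ / τ * u + -(σ₁ * x) / τ := by ring
      have hb1 : K x u ≤ σ₂ / τ * C * nphi x * nphi (σ₂ / τ * u + -(σ₁ * x) / τ) := by
        simp only [hK, ← harg]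
        have p1 := nphi_pos ((σ₂ * u - σ₁ * x) / τ)
        have p2 := nphi_pos x
        calc σ₂ / τ * (H (σ₂ * u) * nphi ((σ₂ * u - σ₁ * x) / τ) * nphi x)
            = σ₂ / τ * (H (σ₂ * u) * (nphi ((σ₂ * u - σ₁ * x) / τ) * nphi x)) := by ring
          _ ≤ σ₂ / τ * (C * (nphi ((σ₂ * u - σ₁ * x) / τ) * nphi x)) := by
              apply mul_le_mul_of_nonneg_left
                (mul_le_mul_of_nonneg_right (hC _) (le_of_lt (mul_pos p1 p2)))
                (le_of_lt hst)
          _ = σ₂ / τ * C * nphi x * nphi ((σ₂ * u - σ₁ * x) / τ) := by ring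
      exact le_trans hb1 (le_abs_self _)
  have hinner_int : ∀ x, Integrable (fun y => H (σ₁ * x + τ * y) * nphi y) := by
    intro x
    apply Integrable.mono (integrable_nphi.const_mul C)
    · exact ((hH.comp (by fun_prop)).mul nphi_cont).aestronglyMeasurable
    · filter_upwards with y
      rw [Real.norm_eq_abs, Real.norm_eq_abs]
      rw [abs_of_nonneg (mul_nonneg (h0 _) (le_of_lt (nphi_pos y)))]
      exact le_trans (mul_le_mul_of_nonneg_right (hC _) (le_of_lt (nphi_pos y)))
        (le_abs_self _)
  have hinner_le : ∀ x, (∫ y, H (σ₁ * x + τ * y) * nphi y) ≤ C := by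
    intro x
    calc (∫ y, H (σ₁ * x + τ * y) * nphi y) ≤ ∫ y, C * nphi y := by
          apply integral_mono (hinner_int x) (integrable_nphi.const_mul C)
          intro y
          exact mul_le_mul_of_nonneg_right (hC _) (le_of_lt (nphi_pos y))
      _ = C := by rw [integral_const_mul, integral_nphi, mul_one]
  have hinner_nonneg : ∀ x, 0 ≤ ∫ y, H (σ₁ * x + τ * y) * nphi y := by
    intro x
    apply integral_nonneg
    intro y
    exact mul_nonneg (h0 _) (le_of_lt (nphi_pos y))
  have hKmeas : AEStronglyMeasurable (uncurry K) (volume.prod volume) :=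
    hKcont.aestronglyMeasurable
  have hKint : Integrable (uncurry K) (volume.prod volume) := by
    rw [integrable_prod_iff hKmeas]
    refine ⟨ae_of_all _ hint_u, ?_⟩
    apply Integrable.mono (integrable_nphi.const_mul C) hKmeas.norm.integral_prod_right'
    filter_upwards with x
    have h1 : ∫ (y : ℝ), ‖uncurry K (x, y)‖ = (∫ y, H (σ₁ * x + τ * y) * nphi y) * nphi x := by
      simp only [Function.uncurry_apply_pair]
      rw [stepA x]
      congr 1
      funext u
      exact norm_of_nonneg (hKnonneg x u)
    rw [Real.norm_eq_abs, Real.norm_eq_abs, h1,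
      abs_of_nonneg (mul_nonneg (hinner_nonneg x) (le_of_lt (nphi_pos x)))]
    exact le_trans (mul_le_mul_of_nonneg_right (hinner_le x) (le_of_lt (nphi_pos x)))
      (le_abs_self _)
  -- step D : integrate out x
  have stepD : ∀ u, (∫ x, K x u) = H (σ₂ * u) * nphi u := by
    intro u
    have hKxu : (fun x => K x u) = fun x =>
        (σ₂ / τ * (H (σ₂ * u) * nphi u)) * nphi (σ₂ / τ * x + -(σ₁ * u) / τ) := by
      funext x
      have hs := nphi_symm hτ0 hsum x u
      have harg : (σ₂ * x - σ₁ * u) / τ = σ₂ / τ * x + -(σ₁ * u) / τ := by ring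
      simp only [hK]
      rw [mul_assoc (H (σ₂ * u)), hs, harg]
      ring
    rw [hKxu, integral_const_mul, integral_nphi_affine hst]
    field_simp
  simp_rw [stepA, integral_integral_swap hKint, stepD]


theorem expected_recruitment_strictAnti (α β : ℝ) (hα : 0 < α) (hβ : 0 < β)
    (g : ℝ → ℝ)
    (hg : ∀ σ, g σ = ∫ ω : ℝ,
      α * Real.exp (σ * ω) / (β * Real.exp (σ ^ 2 / 2) + Real.exp (σ * ω)) *
        ((Real.sqrt (2 * Real.pi))⁻¹ * Real.exp (-(ω ^ 2) / 2))) :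
    StrictAntiOn g (Set.Ici 0) := by
  intro σ₁ hσ₁ σ₂ hσ₂ hlt
  simp only [Set.mem_Ici] at hσ₁ hσ₂
  have h2 : 0 < σ₂ := lt_of_le_of_lt hσ₁ hlt
  have hgr : ∀ σ : ℝ, g σ = ∫ ω, α * Real.exp (σ * ω - σ ^ 2 / 2) /
      (β + Real.exp (σ * ω - σ ^ 2 / 2)) * nphi ω := by
    intro σ
    rw [hg σ]
    congr 1
    funext ω
    unfold nphi
    congr 1
    rw [Real.exp_sub]
    have e1 : Real.exp (σ ^ 2 / 2) ≠ 0 := Real.exp_ne_zero _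
    have e2 : β * Real.exp (σ ^ 2 / 2) + Real.exp (σ * ω) ≠ 0 := by positivity
    have e3 : β + Real.exp (σ * ω) / Real.exp (σ ^ 2 / 2) ≠ 0 := by positivity
    field_simp
  set τ := Real.sqrt (σ₂ ^ 2 - σ₁ ^ 2) with hτdef
  have hτpos : 0 < τ := Real.sqrt_pos.2 (by nlinarith)
  have hsum : σ₁ ^ 2 + τ ^ 2 = σ₂ ^ 2 := by
    rw [hτdef, Real.sq_sqrt (by nlinarith : (0:ℝ) ≤ σ₂ ^ 2 - σ₁ ^ 2)]
    ring
  set H : ℝ → ℝ := fun z => α * Real.exp (z - σ₂ ^ 2 / 2) /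
    (β + Real.exp (z - σ₂ ^ 2 / 2)) with hH
  have hHcont : Continuous H := by
    apply Continuous.div (by fun_prop) (by fun_prop)
    intro z
    positivity
  have hH0 : ∀ z, 0 ≤ H z := fun z => by simp only [hH]; positivity
  have hHC : ∀ z, H z ≤ α := by
    intro z
    simp only [hH]
    rw [div_le_iff₀ (by positivity)]
    nlinarith [Real.exp_pos (z - σ₂ ^ 2 / 2), hβ, hα]
  set G : ℝ → ℝ := fun x => ∫ y, H (σ₁ * x + τ * y) * nphi y with hG
  set L : ℝ → ℝ := fun x => α * Real.exp (σ₁ * x - σ₁ ^ 2 / 2) /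
    (β + Real.exp (σ₁ * x - σ₁ ^ 2 / 2)) with hL
  have hg2 : g σ₂ = ∫ x, G x * nphi x := by
    rw [hgr σ₂, ← gauss_proj hHcont hH0 hHC h2 hτpos hsum]
  have hg1 : g σ₁ = ∫ x, L x * nphi x := hgr σ₁
  -- pointwise Jensen
  have hjen : ∀ x, G x < L x := by
    intro x
    have ha : 0 < Real.exp (σ₁ * x - σ₁ ^ 2 / 2) := Real.exp_pos _
    have hrw : ∀ y, H (σ₁ * x + τ * y) =
        α * (Real.exp (σ₁ * x - σ₁ ^ 2 / 2) * Real.exp (τ * y - τ ^ 2 / 2)) /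
          (β + Real.exp (σ₁ * x - σ₁ ^ 2 / 2) * Real.exp (τ * y - τ ^ 2 / 2)) := by
      intro y
      simp only [hH, ← Real.exp_add]
      have : σ₁ * x + τ * y - σ₂ ^ 2 / 2
          = σ₁ * x - σ₁ ^ 2 / 2 + (τ * y - τ ^ 2 / 2) := by
        rw [← hsum]; ring
      rw [this]
    simp only [hG]
    simp_rw [hrw]
    exact jensen_step hα hβ ha hτpos
  -- integrability
  have hGmeas : AEStronglyMeasurable (fun x => G x * nphi x) volume := by
    have hc : Continuous (fun p : ℝ × ℝ => H (σ₁ * p.1 + τ * p.2) * nphi p.2) :=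
      (hHcont.comp (by fun_prop)).mul (nphi_cont.comp continuous_snd)
    exact hc.aestronglyMeasurable.integral_prod_right'.mul nphi_cont.aestronglyMeasurable
  have hinner_int : ∀ x, Integrable (fun y => H (σ₁ * x + τ * y) * nphi y) := by
    intro x
    apply Integrable.mono (integrable_nphi.const_mul α)
    · exact ((hHcont.comp (by fun_prop)).mul nphi_cont).aestronglyMeasurable
    · filter_upwards with y
      rw [Real.norm_eq_abs, Real.norm_eq_abs,
        abs_of_nonneg (mul_nonneg (hH0 _) (le_of_lt (nphi_pos y)))]
      exact le_trans (mul_le_mul_of_nonneg_right (hHC _) (le_of_lt (nphi_pos y)))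
        (le_abs_self _)
  have hGnonneg : ∀ x, 0 ≤ G x := fun x =>
    integral_nonneg fun y => mul_nonneg (hH0 _) (le_of_lt (nphi_pos y))
  have hGle : ∀ x, G x ≤ α := by
    intro x
    calc G x ≤ ∫ y, α * nphi y := by
          apply integral_mono (hinner_int x) (integrable_nphi.const_mul α)
          intro y
          exact mul_le_mul_of_nonneg_right (hHC _) (le_of_lt (nphi_pos y))
      _ = α := by rw [integral_const_mul, integral_nphi, mul_one]
  have hGint : Integrable (fun x => G x * nphi x) := by
    apply Integrable.mono (integrable_nphi.const_mul α) hGmeas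
    filter_upwards with x
    rw [Real.norm_eq_abs, Real.norm_eq_abs,
      abs_of_nonneg (mul_nonneg (hGnonneg x) (le_of_lt (nphi_pos x)))]
    exact le_trans (mul_le_mul_of_nonneg_right (hGle x) (le_of_lt (nphi_pos x)))
      (le_abs_self _)
  have hLcont : Continuous L := by
    apply Continuous.div (by fun_prop) (by fun_prop)
    intro x
    positivity
  have hLnonneg : ∀ x, 0 ≤ L x := fun x => by simp only [hL]; positivity
  have hLle : ∀ x, L x ≤ α := by
    intro x
    simp only [hL]
    rw [div_le_iff₀ (by positivity)]
    nlinarith [Real.exp_pos (σ₁ * x - σ₁ ^ 2 / 2), hβ, hα]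
  have hLint : Integrable (fun x => L x * nphi x) := by
    apply Integrable.mono (integrable_nphi.const_mul α)
      ((hLcont.mul nphi_cont).aestronglyMeasurable)
    filter_upwards with x
    rw [Real.norm_eq_abs, Real.norm_eq_abs, Pi.mul_apply,
      abs_of_nonneg (mul_nonneg (hLnonneg x) (le_of_lt (nphi_pos x)))]
    exact le_trans (mul_le_mul_of_nonneg_right (hLle x) (le_of_lt (nphi_pos x)))
      (le_abs_self _)
  -- strict comparison
  have hdiff_int : Integrable (fun x => L x * nphi x - G x * nphi x) := hLint.sub hGint
  have hpos : 0 < ∫ x, (L x * nphi x - G x * nphi x) := by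
    rw [integral_pos_iff_support_of_nonneg _ hdiff_int]
    · have hsub : Set.Ioi (0:ℝ) ⊆ support fun x => L x * nphi x - G x * nphi x := by
        intro x _
        have : G x * nphi x < L x * nphi x :=
          mul_lt_mul_of_pos_right (hjen x) (nphi_pos x)
        exact sub_ne_zero.2 (ne_of_gt this)
      refine lt_of_lt_of_le ?_ (measure_mono hsub)
      rw [Real.volume_Ioi]
      exact ENNReal.zero_lt_top
    · intro x
      have : G x * nphi x ≤ L x * nphi x :=
        mul_le_mul_of_nonneg_right (le_of_lt (hjen x)) (le_of_lt (nphi_pos x))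
      exact sub_nonneg.2 this
  rw [hg1, hg2]
  have h := integral_sub hLint hGint
  rw [h] at hpos
  linarith
end
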